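/- Let D be an edge set with u,v connected in G−D, and let e = (x,y) be a tree edge of T_u with x the parent of y, such that π(u,y) contains no edge of D and some vertex of T_u(y) is incident to an edge of D. Suppose P = π_{G−D}(u,v) traverses e. Then the maximal prefix of P all of whose edges lie in T_induced is nonempty, and its last edge e_Δ is either e itself or an edge of T_u both of whose endpoints belong to T_u(y). -/

import Mathlib

open SimpleGraph

variable {V : Type*}

/-- Total weight of a walk with respect to edge weights `w`. -/
def walkWeight (w : Sym2 V → ℝ) {G : SimpleGraph V} {a b : V} (p : G.Walk a b) : ℝ :=
  (p.edges.map w).sum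

/-- `p` is the/a minimum-weight path from `a` to `b` in `G`. -/
def IsShortestPath (w : Sym2 V → ℝ) (G : SimpleGraph V) {a b : V} (p : G.Walk a b) : Prop :=
  p.IsPath ∧ ∀ q : G.Walk a b, q.IsPath → walkWeight w p ≤ walkWeight w q

/-- `Decomposable w G k p` : `p` is the concatenation of at most `k+1` shortest paths
of `G` interleaved with at most `k` single edges. -/
inductive Decomposable (w : Sym2 V → ℝ) (G : SimpleGraph V) :
    ℕ → ∀ {a b : V}, G.Walk a b → Prop
  | single {a b : V} (k : ℕ) (p : G.Walk a b) (hp : IsShortestPath w G p) :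
      Decomposable w G k p
  | cons {a b c d : V} (k : ℕ) (p : G.Walk a b) (h : G.Adj b c) (q : G.Walk c d)
      (hp : IsShortestPath w G p) (hq : Decomposable w G k q) :
      Decomposable w G (k + 1) (p.append (Walk.cons h q))

/-- The rank of a walk `p` in `G`: the least `k` such that `p` is `k`-decomposable. -/
noncomputable def pathRank (w : Sym2 V → ℝ) (G : SimpleGraph V) {a b : V} (p : G.Walk a b) : ℕ :=
  sInf {k | Decomposable w G k p}

section MyAux
variable [DecidableEq V] {G : SimpleGraph V} {w : Sym2 V → ℝ}

lemma my_sum_le (l1 l2 : List (Sym2 V)) (hn : l1.Nodup) (hs : l1 ⊆ l2)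
    (h0 : ∀ e ∈ l2, 0 ≤ w e) : (l1.map w).sum ≤ (l2.map w).sum := by
  have hle : (l1 : Multiset (Sym2 V)) ≤ (l2 : Multiset (Sym2 V)) := by
    rw [Multiset.le_iff_count]
    intro a
    by_cases ha : a ∈ l1
    · calc Multiset.count a (l1 : Multiset (Sym2 V)) = List.count a l1 := by
            simp [Multiset.coe_count]
        _ ≤ 1 := List.nodup_iff_count_le_one.mp hn a
        _ ≤ List.count a l2 := List.count_pos_iff.mpr (hs ha)
        _ = Multiset.count a (l2 : Multiset (Sym2 V)) := by simp [Multiset.coe_count]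
    · simp [Multiset.coe_count, List.count_eq_zero_of_not_mem ha]
  obtain ⟨u, hu⟩ := Multiset.le_iff_exists_add.mp hle
  have : ((l2 : Multiset (Sym2 V)).map w).sum
      = ((l1 : Multiset (Sym2 V)).map w).sum + (u.map w).sum := by
    rw [hu]; simp
  have h2 : (0:ℝ) ≤ (u.map w).sum := by
    apply Multiset.sum_nonneg
    intro x hx
    obtain ⟨e, he, rfl⟩ := Multiset.mem_map.mp hx
    apply h0
    have : e ∈ (l2 : Multiset (Sym2 V)) := by rw [hu]; exact Multiset.mem_add.mpr (Or.inr he)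
    simpa using this
  have e1 : ((l1 : Multiset (Sym2 V)).map w).sum = (l1.map w).sum := by simp
  have e2 : ((l2 : Multiset (Sym2 V)).map w).sum = (l2.map w).sum := by simp
  rw [e1, e2] at this
  linarith

lemma my_shortest_le_walk (h0 : ∀ e ∈ G.edgeSet, 0 ≤ w e) {a b : V} {p : G.Walk a b}
    (hp : IsShortestPath w G p) (q : G.Walk a b) : walkWeight w p ≤ walkWeight w q :=
  (hp.2 q.bypass q.bypass_isPath).trans
    (my_sum_le _ _ q.bypass_isPath.edges_nodup q.edges_bypass_subset
      (fun e he => h0 e (q.edges_subset_edgeSet he)))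

lemma my_walkWeight_append {a b c : V} (p : G.Walk a b) (q : G.Walk b c) :
    walkWeight w (p.append q) = walkWeight w p + walkWeight w q := by
  simp [walkWeight, SimpleGraph.Walk.edges_append]

lemma my_prefix_shortest (h0 : ∀ e ∈ G.edgeSet, 0 ≤ w e) {a b c : V} {p : G.Walk a b}
    {q : G.Walk b c} (h : IsShortestPath w G (p.append q)) : IsShortestPath w G p := by
  refine ⟨h.1.of_append_left, fun p' hp' => ?_⟩
  have := my_shortest_le_walk h0 h (p'.append q)
  rw [my_walkWeight_append, my_walkWeight_append] at this
  linarith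

lemma my_edges_nil_of_shortest_self (hw : ∀ e ∈ G.edgeSet, 0 < w e) {a : V} {p : G.Walk a a}
    (hp : IsShortestPath w G p) : p.edges = [] := by
  by_contra h
  have h1 : 0 < walkWeight w p := by
    apply List.sum_pos
    · intro x hx
      obtain ⟨e, he, rfl⟩ := List.mem_map.mp hx
      exact hw e (p.edges_subset_edgeSet he)
    · simpa [walkWeight] using h
  have h2 := hp.2 Walk.nil Walk.IsPath.nil
  simp only [walkWeight, Walk.edges_nil, List.map_nil, List.sum_nil] at h2
  exact absurd h2 (not_le.mpr h1)

lemma my_treeEdge_aux (hw : ∀ e ∈ G.edgeSet, 0 < w e) (πG : ∀ a b : V, G.Walk a b)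
    (hπG : ∀ a b : V, IsShortestPath w G (πG a b))
    (huniqG : ∀ (a b : V) (p q : G.Walk a b),
      IsShortestPath w G p → IsShortestPath w G q → p = q) (u : V) :
    ∀ {a b : V} (p : G.Walk a b) (q : G.Walk u a), IsShortestPath w G (q.append p) →
      ∀ e ∈ p.edges, ∃ (c d : V) (h : G.Adj c d), e = s(c, d) ∧ πG u d = (πG u c).concat h := by
  have h0 : ∀ e ∈ G.edgeSet, 0 ≤ w e := fun e he => (hw e he).le
  intro a b p
  induction p with
  | nil => intro q _ e he; simp at he
  | @cons a a' b h' p' ih =>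
    intro q hq e he
    rw [Walk.edges_cons, List.mem_cons] at he
    rcases he with rfl | he
    · refine ⟨a, a', h', rfl, ?_⟩
      have hconc : IsShortestPath w G (q.concat h') := by
        apply my_prefix_shortest h0 (q := p')
        rwa [Walk.concat_append]
      have hq' : IsShortestPath w G q :=
        my_prefix_shortest h0 (q := Walk.cons h' p') hq
      have e1 : πG u a = q := huniqG u a _ _ (hπG u a) hq'
      have e2 : πG u a' = q.concat h' := huniqG u a' _ _ (hπG u a') hconc
      rw [e1, e2]
    · exact ih (q.concat h') (by rwa [Walk.concat_append]) e he

lemma my_treeEdge (hw : ∀ e ∈ G.edgeSet, 0 < w e) (πG : ∀ a b : V, G.Walk a b)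
    (hπG : ∀ a b : V, IsShortestPath w G (πG a b))
    (huniqG : ∀ (a b : V) (p q : G.Walk a b),
      IsShortestPath w G p → IsShortestPath w G q → p = q) (u : V) {a : V}
    {e : Sym2 V} (he : e ∈ (πG u a).edges) :
    ∃ (c d : V) (h : G.Adj c d), e = s(c, d) ∧ πG u d = (πG u c).concat h := by
  apply my_treeEdge_aux hw πG hπG huniqG u (πG u a) Walk.nil _ e he
  rw [Walk.nil_append]
  exact hπG u a

lemma my_takeWhile_append (p : Sym2 V → Bool) (l1 l2 : List (Sym2 V))
    (h : ∀ x ∈ l1, p x = true) : (l1 ++ l2).takeWhile p = l1 ++ l2.takeWhile p := by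
  induction l1 with
  | nil => simp
  | cons a l ih =>
    rw [List.cons_append, List.takeWhile_cons_of_pos (h a (by simp)), List.cons_append,
      ih (fun x hx => h x (by simp [hx]))]

lemma my_getLast_of_getLast? {α : Type*} {l : List α} {a : α} (h : l.getLast? = some a)
    (hl : l ≠ []) : l.getLast hl = a := by
  rw [List.getLast?_eq_getLast hl] at h
  exact Option.some.inj h
lemma my_lastEdge_aux [DecidableEq V] {G : SimpleGraph V} {w : Sym2 V → ℝ}
    (hw : ∀ e ∈ G.edgeSet, 0 < w e) (πG : ∀ a b : V, G.Walk a b)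
    (hπG : ∀ a b : V, IsShortestPath w G (πG a b))
    (huniqG : ∀ (a b : V) (p q : G.Walk a b),
      IsShortestPath w G p → IsShortestPath w G q → p = q)
    (D : Set (Sym2 V)) (u v y : V) (pred : Sym2 V → Bool)
    (hpred : ∀ e, pred e = true → ∃ a : V, e ∈ (πG u a).edges) :
    ∀ {c : V} (Q : (G.deleteEdges D).Walk c v),
      y ∈ (πG u c).support →
      ((πG u c).edges ++ Q.edges).Nodup →
      ∀ hne : Q.edges.takeWhile pred ≠ [],
      ∃ (p q : V) (hpq : G.Adj p q),
        (Q.edges.takeWhile pred).getLast hne = s(p, q) ∧ πG u q = (πG u p).concat hpq ∧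
        y ∈ (πG u p).support ∧ y ∈ (πG u q).support := by
  intro c Q
  induction Q with
  | nil => intro _ _ hne; simp [Walk.edges_nil] at hne
  | @cons c c' v h Q' ih =>
    intro hy hnd hne
    by_cases hp : pred s(c, c') = true
    · obtain ⟨a, ha⟩ := hpred _ hp
      obtain ⟨p0, q0, hpq0, heq, htr⟩ := my_treeEdge hw πG hπG huniqG u ha
      rcases Sym2.eq_iff.mp heq with ⟨rfl, rfl⟩ | ⟨rfl, rfl⟩
      · -- c = p0, c' = q0 : πG u c' = (πG u c).concat hpq0
        have hy' : y ∈ (πG u c').support := by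
          rw [htr, Walk.support_concat]
          exact List.mem_append_left _ hy
        have hedges' : (Walk.cons h Q').edges.takeWhile pred
            = s(c, c') :: Q'.edges.takeWhile pred := by
          rw [Walk.edges_cons, List.takeWhile_cons_of_pos hp]
        by_cases ht' : Q'.edges.takeWhile pred = []
        · refine ⟨c, c', hpq0, ?_, htr, hy, hy'⟩
          apply my_getLast_of_getLast?
          rw [hedges', ht']
          simp
        · have hnd' : ((πG u c').edges ++ Q'.edges).Nodup := by
            rw [htr, Walk.edges_concat]
            rw [Walk.edges_cons] at hnd
            simpa [List.concat_eq_append, List.append_assoc] using hnd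
          obtain ⟨p, q, hpq, hlast, rest⟩ := ih hy' hnd' ht'
          refine ⟨p, q, hpq, ?_, rest⟩
          apply my_getLast_of_getLast?
          rw [hedges', ← List.singleton_append, List.getLast?_append,
            List.getLast?_eq_getLast ht', hlast]
          simp
      · -- c = q0, c' = p0 : πG u c = (πG u c').concat hpq0 ; contradiction
        exfalso
        have hmem : s(c, c') ∈ (πG u c).edges := by
          rw [htr, Walk.edges_concat, List.concat_eq_append]
          exact List.mem_append_right _ (by simp [Sym2.eq_swap])
        have hdisj := List.disjoint_of_nodup_append hnd
        exact hdisj hmem (by rw [Walk.edges_cons]; exact List.mem_cons_self)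
    · exfalso; apply hne; rw [Walk.edges_cons, List.takeWhile_cons_of_neg hp]
end MyAux

/-- Case 2.6.  Let `e = (x,y)` be a tree edge of `T_u` with `x` the
parent of `y`, such that `π(u,y)` contains no edge of `D` and some vertex of `T_u(y)` is
incident to an edge of `D`.  If `P = π_{G−D}(u,v)` traverses `e`, then the maximal prefix
of `P` all of whose edges lie in `T_induced` is nonempty, and its last edge `e_Δ` is either
`e` itself or an edge of `T_u` both of whose endpoints belong to `T_u(y)`.

Here `T_induced` is the set of edges of `T_u` lying on the `T_u`-path between some pair of
vertices of `V(D) ∪ {u}`; since `T_u` is rooted at `u`, an edge lies on the tree path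
between `a` and `b` iff it lies on exactly one of the root paths `π(u,a)`, `π(u,b)`. -/


theorem stmt11 [Fintype V] [DecidableEq V] (G : SimpleGraph V) (w : Sym2 V → ℝ)
    (hw : ∀ e ∈ G.edgeSet, 0 < w e)
    (πG : ∀ a b : V, G.Walk a b) (hπG : ∀ a b : V, IsShortestPath w G (πG a b))
    (huniqG : ∀ (a b : V) (p q : G.Walk a b),
      IsShortestPath w G p → IsShortestPath w G q → p = q)
    (D : Set (Sym2 V)) (hDsub : D ⊆ G.edgeSet)
    (huniqD : ∀ (a b : V) (p q : (G.deleteEdges D).Walk a b),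
      IsShortestPath w (G.deleteEdges D) p → IsShortestPath w (G.deleteEdges D) q → p = q)
    (u v : V)
    (P : (G.deleteEdges D).Walk u v) (hP : IsShortestPath w (G.deleteEdges D) P)
    (x y : V) (hadj : G.Adj x y)
    -- (x,y) is a tree edge of T_u with x the parent of y
    (htree : πG u y = (πG u x).concat hadj)
    -- π(u,y) contains no edge of D
    (huy : ∀ e ∈ (πG u y).edges, e ∉ D)
    -- some vertex of T_u(y) is incident to an edge of D
    (hfail : ∃ z : V, y ∈ (πG u z).support ∧ ∃ f ∈ D, z ∈ f)
    -- P traverses e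
    (heP : s(x, y) ∈ P.edges) :
    -- T_induced, as a predicate on edges
    let Tind : Sym2 V → Prop := fun e =>
      ∃ a : V, ((∃ f ∈ D, a ∈ f) ∨ a = u) ∧ ∃ b : V, ((∃ f ∈ D, b ∈ f) ∨ b = u) ∧
        Xor' (e ∈ (πG u a).edges) (e ∈ (πG u b).edges)
    -- the maximal prefix of P all of whose edges lie in T_induced
    let pre : List (Sym2 V) :=
      P.edges.takeWhile fun e => @decide (Tind e) (Classical.propDecidable _)
    ∃ hne : pre ≠ [],
      pre.getLast hne = s(x, y) ∨
      ∃ (a b : V) (hab : G.Adj a b), pre.getLast hne = s(a, b) ∧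
        πG u b = (πG u a).concat hab ∧
        y ∈ (πG u a).support ∧ y ∈ (πG u b).support := by
  intro Tind pre
  have h0 : ∀ e ∈ G.edgeSet, 0 ≤ w e := fun e he => (hw e he).le
  have h0D : ∀ e ∈ (G.deleteEdges D).edgeSet, 0 ≤ w e :=
    fun e he => h0 e (edgeSet_mono (G.deleteEdges_le D) he)
  have hpredEx : ∀ e, (fun e => @decide (Tind e) (Classical.propDecidable _)) e = true →
      ∃ a : V, e ∈ (πG u a).edges := by
    intro e hp
    have hT : Tind e := @of_decide_eq_true (Tind e) (Classical.propDecidable _) hp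
    obtain ⟨a, _, b, _, hxor⟩ := hT
    rcases hxor with ⟨h1, _⟩ | ⟨h1, _⟩
    · exact ⟨a, h1⟩
    · exact ⟨b, h1⟩
  -- transfer π(u,y) to G − D
  have hedgesK : ∀ e ∈ (πG u y).edges, e ∈ (G.deleteEdges D).edgeSet := by
    intro e he
    rw [edgeSet_deleteEdges]
    exact ⟨(πG u y).edges_subset_edgeSet he, huy e he⟩
  have hPuyE : ((πG u y).transfer _ hedgesK).edges = (πG u y).edges :=
    Walk.edges_transfer _ _
  have hPuyPath : ((πG u y).transfer _ hedgesK).IsPath := by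
    rw [Walk.isPath_def, Walk.support_transfer]
    exact (Walk.isPath_def _).mp (hπG u y).1
  have hPuyShort : IsShortestPath w (G.deleteEdges D) ((πG u y).transfer _ hedgesK) := by
    refine ⟨hPuyPath, fun q hq => ?_⟩
    have hq' : ∀ e ∈ q.edges, e ∈ G.edgeSet :=
      fun e he => edgeSet_mono (G.deleteEdges_le D) (q.edges_subset_edgeSet he)
    have hqG : (q.transfer G hq').IsPath := by
      rw [Walk.isPath_def, Walk.support_transfer]
      exact (Walk.isPath_def _).mp hq
    have hle := (hπG u y).2 (q.transfer G hq') hqG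
    simpa [walkWeight, Walk.edges_transfer, hPuyE] using hle
  have hyP : y ∈ P.support := Walk.snd_mem_support_of_mem_edges P heP
  have hspec := P.take_spec hyP
  have hP1short : IsShortestPath w (G.deleteEdges D) (P.takeUntil y hyP) := by
    apply my_prefix_shortest h0D (q := P.dropUntil y hyP)
    rwa [hspec]
  have hP1 : P.takeUntil y hyP = (πG u y).transfer _ hedgesK :=
    huniqD u y _ _ hP1short hPuyShort
  have hPedges : P.edges = (πG u y).edges ++ (P.dropUntil y hyP).edges := by
    conv_lhs => rw [← hspec]
    rw [Walk.edges_append, hP1, hPuyE]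
  obtain ⟨z, hyz, hfz⟩ := hfail
  have hzspec := (πG u z).take_spec hyz
  have hzpre : IsShortestPath w G ((πG u z).takeUntil y hyz) := by
    apply my_prefix_shortest h0 (q := (πG u z).dropUntil y hyz)
    rw [hzspec]
    exact hπG u z
  have hzeq : (πG u z).takeUntil y hyz = πG u y := huniqG u y _ _ hzpre (hπG u y)
  have hsub : ∀ e ∈ (πG u y).edges, e ∈ (πG u z).edges := by
    intro e he
    rw [← hzspec, Walk.edges_append]
    exact List.mem_append_left _ (by rwa [hzeq])
  have huu : (πG u u).edges = [] := my_edges_nil_of_shortest_self hw (hπG u u)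
  have hallpred : ∀ e ∈ (πG u y).edges,
      (fun e => @decide (Tind e) (Classical.propDecidable _)) e = true := by
    intro e he
    apply @decide_eq_true (Tind e) (Classical.propDecidable _)
    refine ⟨z, Or.inl hfz, u, Or.inr rfl, Or.inl ⟨hsub e he, ?_⟩⟩
    rw [huu]
    simp
  have hconc : (πG u y).edges = (πG u x).edges ++ [s(x, y)] := by
    rw [htree, Walk.edges_concat, List.concat_eq_append]
  have hne1 : (πG u y).edges ≠ [] := by rw [hconc]; simp
  have hpreeq : pre = (πG u y).edges ++
      ((P.dropUntil y hyP).edges.takeWhile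
        (fun e => @decide (Tind e) (Classical.propDecidable _))) := by
    show P.edges.takeWhile _ = _
    rw [hPedges, my_takeWhile_append _ _ _ hallpred]
  have hnepre : pre ≠ [] := by
    rw [hpreeq]
    intro hcontra
    exact hne1 (List.append_eq_nil_iff.mp hcontra).1
  refine ⟨hnepre, ?_⟩
  by_cases ht : (P.dropUntil y hyP).edges.takeWhile
      (fun e => @decide (Tind e) (Classical.propDecidable _)) = []
  · left
    apply my_getLast_of_getLast?
    rw [hpreeq, ht, List.append_nil, hconc, List.getLast?_concat]
  · right
    have hnodup : ((πG u y).edges ++ (P.dropUntil y hyP).edges).Nodup := by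
      rw [← hPedges]
      exact hP.1.edges_nodup
    obtain ⟨p, q, hpq, hlast, htr, hyp', hyq'⟩ :=
      my_lastEdge_aux hw πG hπG huniqG D u v y _ hpredEx (P.dropUntil y hyP)
        ((πG u y).end_mem_support) hnodup ht
    refine ⟨p, q, hpq, ?_, htr, hyp', hyq'⟩
    apply my_getLast_of_getLast?
    rw [hpreeq, List.getLast?_append, List.getLast?_eq_getLast ht, hlast]
    simp
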